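/- Let j, k, m, n be positive integers with (j,k) ≠ (m,n), j ≠ k, m ≠ n, and j² - k² - m² + n² = 0 with (j,k,m,n) not yielding equal multisets {j²,k²} = {m²,n²}. Then 1/j² - 1/k² - 1/m² + 1/n² ≠ 0. -/
import Mathlib


theorem stmt3 (j k m n : ℕ) (hj : 0 < j) (hk : 0 < k) (hm : 0 < m) (hn : 0 < n)
    (hpair : (j, k) ≠ (m, n)) (hjk : j ≠ k) (hmn : m ≠ n)
    (hres : (j : ℤ) ^ 2 - (k : ℤ) ^ 2 - (m : ℤ) ^ 2 + (n : ℤ) ^ 2 = 0)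
    (hmulti : ({j ^ 2, k ^ 2} : Multiset ℕ) ≠ {m ^ 2, n ^ 2}) :
    1 / (j : ℝ) ^ 2 - 1 / (k : ℝ) ^ 2 - 1 / (m : ℝ) ^ 2 + 1 / (n : ℝ) ^ 2 ≠ 0 := by
  intro h
  have hjR : (0:ℝ) < (j:ℝ)^2 := by positivity
  have hkR : (0:ℝ) < (k:ℝ)^2 := by positivity
  have hmR : (0:ℝ) < (m:ℝ)^2 := by positivity
  have hnR : (0:ℝ) < (n:ℝ)^2 := by positivity
  have hres' : (j:ℝ)^2 - (k:ℝ)^2 - (m:ℝ)^2 + (n:ℝ)^2 = 0 := by exact_mod_cast hres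
  have h' : ((k:ℝ)^2 * (m:ℝ)^2 * (n:ℝ)^2) - ((j:ℝ)^2 * (m:ℝ)^2 * (n:ℝ)^2)
      - ((j:ℝ)^2 * (k:ℝ)^2 * (n:ℝ)^2) + ((j:ℝ)^2 * (k:ℝ)^2 * (m:ℝ)^2) = 0 := by
    field_simp at h
    nlinarith [h]
  have key3 : ((j:ℝ)^2 - (k:ℝ)^2) * ((j:ℝ)^2 - (m:ℝ)^2) * ((k:ℝ)^2 + (m:ℝ)^2) = 0 := by
    linear_combination h' - ((k:ℝ)^2 * (m:ℝ)^2 - (j:ℝ)^2 * (m:ℝ)^2 - (j:ℝ)^2 * (k:ℝ)^2) * hres'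
  have key : ((j:ℝ)^2 - (k:ℝ)^2) * ((j:ℝ)^2 - (m:ℝ)^2) = 0 := by
    rcases mul_eq_zero.mp key3 with h0 | h0
    · exact h0
    · linarith
  have sqinj : ∀ a b : ℕ, (a:ℝ)^2 = (b:ℝ)^2 → a = b := by
    intro a b hab
    have : (a:ℕ)^2 = b^2 := by exact_mod_cast hab
    exact Nat.pow_left_injective (by norm_num) this
  rcases mul_eq_zero.mp key with h1 | h2
  · exact hjk (sqinj j k (by linarith))
  · have hjm : j = m := sqinj j m (by linarith)
    have hnk : n = k := sqinj n k (by nlinarith [hres', h2])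
    exact hmulti (by rw [hjm, hnk])
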